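/- If s : ℕ → {0, 1} is a Sturmian (balanced) sequence, then the limit as n → ∞ of (1/n)·#{i < n : s_i = 1} exists. -/

import Mathlib

open Filter Finset

/-- A sequence `s : ℕ → ℕ` with values in `{0,1}` is Sturmian (balanced) if the
numbers of `1`'s in any two blocks of the same length differ by at most one. -/
def IsSturmianSeq (s : ℕ → ℕ) : Prop :=
  (∀ i, s i = 0 ∨ s i = 1) ∧
  ∀ (n i j : ℕ),
    |(∑ k ∈ Finset.range n, (s (i + k) : ℤ)) - ∑ k ∈ Finset.range n, (s (j + k) : ℤ)| ≤ 1

/-- For a Sturmian (balanced) sequence, the limiting frequency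
`lim (1/n)·#{i < n : s i = 1}` of `1`'s exists.
This limit is the rotation number of the sequence. -/
theorem sturmian_frequency_exists (s : ℕ → ℕ) (hs : IsSturmianSeq s) :
    ∃ θ : ℝ, Tendsto
      (fun n : ℕ => (((Finset.range n).filter (fun i => s i = 1)).card : ℝ) / n)
      atTop (nhds θ) := by
  obtain ⟨h01, hbal⟩ := hs
  set u : ℕ → ℝ := fun n => (∑ k ∈ Finset.range n, (s k : ℝ)) + 1 with hu
  have hsub : Subadditive u := by
    intro m n
    have key : (∑ k ∈ Finset.range n, (s (m + k) : ℤ)) - ∑ k ∈ Finset.range n, (s (0 + k) : ℤ) ≤ 1 :=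
      le_trans (le_abs_self _) (hbal n m 0)
    have split : ∑ k ∈ Finset.range (m + n), (s k : ℤ) =
        (∑ k ∈ Finset.range m, (s k : ℤ)) + ∑ k ∈ Finset.range n, (s (m + k) : ℤ) := by
      rw [Finset.sum_range_add]
    have hZ : ∑ k ∈ Finset.range (m + n), (s k : ℤ) ≤
        (∑ k ∈ Finset.range m, (s k : ℤ)) + (∑ k ∈ Finset.range n, (s k : ℤ)) + 1 := by
      rw [split]
      simp only [zero_add] at key
      linarith
    have hR : (∑ k ∈ Finset.range (m + n), (s k : ℝ)) ≤
        (∑ k ∈ Finset.range m, (s k : ℝ)) + (∑ k ∈ Finset.range n, (s k : ℝ)) + 1 := by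
      have := hZ
      push_cast at this
      exact_mod_cast this
    simp only [hu]
    linarith
  have hbdd : BddBelow (Set.range fun n => u n / n) := by
    refine ⟨0, ?_⟩
    rintro x ⟨n, rfl⟩
    apply div_nonneg _ (Nat.cast_nonneg n)
    have : (0:ℝ) ≤ ∑ k ∈ Finset.range n, (s k : ℝ) :=
      Finset.sum_nonneg fun k _ => by positivity
    simp only [hu]; linarith
  have hlim := hsub.tendsto_lim hbdd
  refine ⟨hsub.lim, ?_⟩
  have hcard : ∀ n, (((Finset.range n).filter (fun i => s i = 1)).card : ℝ) =
      ∑ k ∈ Finset.range n, (s k : ℝ) := by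
    intro n
    rw [Finset.card_filter]
    push_cast
    refine Finset.sum_congr rfl fun i _ => ?_
    rcases h01 i with h | h <;> simp [h]
  have h2 : Tendsto (fun n : ℕ => u n / n - 1 / n) atTop (nhds (hsub.lim - 0)) :=
    hlim.sub tendsto_one_div_atTop_nhds_zero_nat
  rw [sub_zero] at h2
  refine h2.congr' ?_
  filter_upwards [eventually_ne_atTop 0] with n hn
  have hn' : (n:ℝ) ≠ 0 := Nat.cast_ne_zero.2 hn
  rw [hcard]
  field_simp [hu]
  simp only [hu]; ring
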